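/- Let N = 16. For each a ∈ 𝔽_N^×, the set π_a = {(x, ax) : x ∈ 𝔽_N^×, Tr(ax²) = 1} has exactly 8 elements, and the 15 sets {π_a : a ∈ 𝔽_N^×} partition the set {(x,y) ∈ 𝔽_N² : Tr(xy) = 1}. -/

import Mathlib

open Finset Polynomial

section Aux
variable {K : Type*} [Field K] [Fintype K] (hK : Fintype.card K = 16)

lemma aux_char (hK : Fintype.card K = 16) : CharP K 2 := by
  have hp : (ringChar K).Prime := CharP.char_is_prime K _
  haveI := Fact.mk hp
  obtain ⟨n, hn1, hn2⟩ := FiniteField.card K (ringChar K)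
  rw [hK] at hn2
  have : ringChar K ∣ 2 ^ 4 := by
    rw [show (16:ℕ) = 2^4 by norm_num] at hn2; exact hn2 ▸ dvd_pow_self _ n.ne_zero
  have h2 : ringChar K = 2 := (Nat.prime_dvd_prime_iff_eq hp Nat.prime_two).mp (hp.dvd_of_dvd_pow this)
  rw [← h2]; infer_instance

-- trace is additive
lemma aux_tr_add (hK : Fintype.card K = 16) (a b : K) :
    (a+b) + (a+b)^2 + (a+b)^4 + (a+b)^8
      = (a + a^2 + a^4 + a^8) + (b + b^2 + b^4 + b^8) := by
  haveI := aux_char hK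
  haveI : Fact (Nat.Prime 2) := ⟨Nat.prime_two⟩
  have h2 : ∀ x y : K, (x+y)^2 = x^2 + y^2 := fun x y => add_pow_char x y 2
  have h4 : ∀ x y : K, (x+y)^4 = x^4 + y^4 := by
    intro x y
    calc (x+y)^4 = ((x+y)^2)^2 := by ring
    _ = (x^2+y^2)^2 := by rw [h2]
    _ = (x^2)^2 + (y^2)^2 := h2 _ _
    _ = x^4 + y^4 := by ring
  have h8 : ∀ x y : K, (x+y)^8 = x^8 + y^8 := by
    intro x y
    calc (x+y)^8 = ((x+y)^4)^2 := by ring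
    _ = (x^4+y^4)^2 := by rw [h4]
    _ = (x^4)^2 + (y^4)^2 := h2 _ _
    _ = x^8 + y^8 := by ring
  rw [h2, h4, h8]; ring

lemma aux_tr_sq (hK : Fintype.card K = 16) (a : K) :
    (a + a^2 + a^4 + a^8)^2 = a + a^2 + a^4 + a^8 := by
  haveI := aux_char hK
  haveI : Fact (Nat.Prime 2) := ⟨Nat.prime_two⟩
  have h2 : ∀ x y : K, (x+y)^2 = x^2 + y^2 := fun x y => add_pow_char x y 2
  have h16 : a^16 = a := by
    have := FiniteField.pow_card a
    rwa [hK] at this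
  calc (a + a^2 + a^4 + a^8)^2
      = a^2 + a^4 + a^8 + a^16 := by rw [h2, h2, h2]; ring
    _ = a + a^2 + a^4 + a^8 := by rw [h16]; ring

lemma aux_tr_card [DecidableEq K] (hK : Fintype.card K = 16) :
    (univ.filter (fun z : K => z + z^2 + z^4 + z^8 = 1)).card = 8 := by
  haveI := aux_char hK
  classical
  set tr : K → K := fun a => a + a^2 + a^4 + a^8 with htr
  set S0 := univ.filter (fun z : K => tr z = 0) with hS0def
  set S1 := univ.filter (fun z : K => tr z = 1) with hS1def
  -- S0 bound via polynomial roots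
  have hS0 : S0.card ≤ 8 := by
    set P : K[X] := X + X^2 + X^4 + X^8 with hP
    have hc : P.coeff 8 = 1 := by
      simp [hP, coeff_X_pow, coeff_X]
    have hPne : P ≠ 0 := fun h => by simp [h] at hc
    have hdeg : P.natDegree ≤ 8 := by
      rw [hP]; compute_degree
    have hsub : S0 ⊆ P.roots.toFinset := by
      intro z hz
      rw [Multiset.mem_toFinset, mem_roots hPne]
      simp only [hS0def, mem_filter] at hz
      simp only [IsRoot, hP, eval_add, eval_pow, eval_X]
      exact hz.2
    calc S0.card ≤ P.roots.toFinset.card := Finset.card_le_card hsub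
      _ ≤ Multiset.card P.roots := Multiset.toFinset_card_le _
      _ ≤ P.natDegree := P.card_roots' 
      _ ≤ 8 := hdeg
  -- total
  have h01 : ∀ z : K, tr z = 0 ∨ tr z = 1 := by
    intro z
    have hsq := aux_tr_sq hK z
    have : tr z * (tr z - 1) = 0 := by
      simp only [htr]; linear_combination hsq
    rcases mul_eq_zero.mp this with h | h
    · exact Or.inl h
    · exact Or.inr (by linear_combination h)
  have hdisj : Disjoint S0 S1 := by
    rw [Finset.disjoint_left]
    intro z h0 h1
    simp only [hS0def, hS1def, mem_filter] at h0 h1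
    exact one_ne_zero (h1.2 ▸ h0.2 : (1:K) = 0)
  have htot : S0.card + S1.card = 16 := by
    rw [← Finset.card_union_of_disjoint hdisj]
    have : S0 ∪ S1 = univ := by
      ext z
      simp only [hS0def, hS1def, Finset.mem_union, mem_filter, mem_univ, true_and, iff_true]
      exact h01 z
    rw [this, Finset.card_univ, hK]
  -- S1 nonempty
  have hge : 8 ≤ S1.card := by omega
  obtain ⟨z₀, hz₀⟩ := Finset.card_pos.mp (by omega : 0 < S1.card)
  simp only [hS1def, mem_filter] at hz₀
  have hle : S1.card ≤ S0.card := by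
    apply Finset.card_le_card_of_injOn (fun w => w + z₀)
    · intro w hw
      simp only [hS1def, Finset.mem_coe, mem_filter] at hw
      simp only [hS0def, Finset.mem_coe, mem_filter, mem_univ, true_and]
      have hadd : tr (w + z₀) = tr w + tr z₀ := aux_tr_add hK w z₀
      rw [hadd, hw.2, hz₀.2]
      exact CharTwo.add_self_eq_zero 1
    · intro x _ y _ h
      exact add_right_cancel h
  omega

end Aux

/-- Let `K = 𝔽₁₆` with trace `Tr(a) = a + a² + a⁴ + a⁸`. For each `a ≠ 0` the set
`π_a = {(x, ax) : x ≠ 0, Tr(ax²) = 1}` has exactly `8` elements, and the `15` sets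
`π_a` (for `a ≠ 0`) partition the set `{(x,y) : Tr(xy) = 1}`. -/
theorem E8_clique_partition (K : Type*) [Field K] [Fintype K]
    (hK : Fintype.card K = 16) :
    let tr : K → K := fun a => a + a ^ 2 + a ^ 4 + a ^ 8
    let π : K → Set (K × K) := fun a =>
      {p | ∃ x : K, x ≠ 0 ∧ tr (a * x ^ 2) = 1 ∧ p = (x, a * x)}
    (∀ a : K, a ≠ 0 → Nat.card (π a) = 8) ∧
    (∀ a b : K, a ≠ 0 → b ≠ 0 → a ≠ b → Disjoint (π a) (π b)) ∧
    (⋃ a ∈ ({a : K | a ≠ 0}), π a) = {p : K × K | tr (p.1 * p.2) = 1} := by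
  classical
  intro tr π
  haveI := aux_char hK
  haveI : Fact (Nat.Prime 2) := ⟨Nat.prime_two⟩
  have htr0 : tr 0 = 0 := by show (0:K) + 0^2 + 0^4 + 0^8 = 0; ring
  have hsq_inj : Function.Injective (fun x : K => x^2) := by
    intro x y h
    apply frobenius_inj K 2
    simpa [frobenius_def] using h
  have hsq_surj : Function.Surjective (fun x : K => x^2) :=
    Finite.surjective_of_injective hsq_inj
  refine ⟨?_, ?_, ?_⟩
  · -- cardinality
    intro a ha
    have hset : π a =
        ↑((univ.filter (fun x : K => x ≠ 0 ∧ tr (a * x^2) = 1)).image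
          (fun x => (x, a*x))) := by
      ext p
      simp only [π, Set.mem_setOf_eq, Finset.coe_image, Set.mem_image,
        Finset.mem_coe, mem_filter, mem_univ, true_and]
      constructor
      · rintro ⟨x, hx, htx, rfl⟩; exact ⟨x, ⟨hx, htx⟩, rfl⟩
      · rintro ⟨x, ⟨hx, htx⟩, rfl⟩; exact ⟨x, hx, htx, rfl⟩
    rw [hset, Nat.card_coe_set_eq, Set.ncard_coe_finset,
      Finset.card_image_of_injective _ (fun x y h => congrArg Prod.fst h)]
    rw [← aux_tr_card hK]
    apply Finset.card_bij (fun x _ => a * x^2)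
    · intro x hx
      simp only [mem_filter, mem_univ, true_and] at hx ⊢
      exact hx.2
    · intro x hx y hy h
      exact hsq_inj (mul_left_cancel₀ ha h)
    · intro z hz
      simp only [mem_filter, mem_univ, true_and] at hz
      obtain ⟨x, hx⟩ := hsq_surj (a⁻¹ * z)
      simp only at hx
      have hax : a * x^2 = z := by rw [hx]; field_simp
      refine ⟨x, ?_, hax⟩
      simp only [mem_filter, mem_univ, true_and]
      refine ⟨?_, by rw [hax]; exact hz⟩
      rintro rfl
      have hz0 : z = 0 := by rw [← hax]; ring
      rw [hz0] at hz
      norm_num at hz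
  · -- disjointness
    intro a b ha hb hab
    rw [Set.disjoint_left]
    rintro p ⟨x, hx, htx, rfl⟩ ⟨y, hy, hty, heq⟩
    have h1 : x = y := congrArg Prod.fst heq
    have h2 : a * x = b * y := congrArg Prod.snd heq
    rw [← h1] at h2
    exact hab (mul_right_cancel₀ hx h2)
  · -- union
    ext ⟨x, y⟩
    simp only [Set.mem_iUnion, Set.mem_setOf_eq, exists_prop]
    constructor
    · rintro ⟨a, ha, z, hz, htz, heq⟩
      have h1 : x = z := congrArg Prod.fst heq
      have h2 : y = a * z := congrArg Prod.snd heq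
      rw [h1, h2, show z * (a * z) = a * z^2 by ring]
      exact htz
    · intro h
      have hx : x ≠ 0 := by
        rintro rfl
        rw [show (0:K) * y = 0 by ring, htr0] at h
        exact one_ne_zero h.symm
      have hy : y ≠ 0 := by
        rintro rfl
        rw [show x * (0:K) = 0 by ring, htr0] at h
        exact one_ne_zero h.symm
      refine ⟨y * x⁻¹, mul_ne_zero hy (inv_ne_zero hx), x, hx, ?_, ?_⟩
      · have : y * x⁻¹ * x^2 = x * y := by field_simp
        rw [this]; exact h
      · have : y * x⁻¹ * x = y := by field_simp
        rw [this]
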